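/- Let d_1 ≤ ... ≤ d_p be reals in [0,1] and let λ > 0. Among all binary vectors a ∈ {0,1}^p, the loss L(a) = ∑_i (1 - a_i)(1 - d_i)/(p - ∑_j a_j) + λ ∑_i a_i d_i / (∑_j a_j) (with 0/0 := 0) is minimized by a vector of the form a^{(j)} where a^{(j)}_i = 1 if d_i ≤ d_{(j)} and 0 otherwise, for some j ∈ {0,1,...,p}. In other words, for every a ∈ {0,1}^p there exists j with L(a^{(j)}) ≤ L(a). -/

import Mathlib

open Finset


/-- convexity of 1/x written explicitly -/
private lemma inv_convex {a b c : ℝ} (ha : 0 < a) (hab : a < b) (hbc : b < c) :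
    1/b ≤ (c-b)/((c-a)*a) + (b-a)/((c-a)*c) := by
  have hb : 0 < b := ha.trans hab
  have hc : 0 < c := hb.trans hbc
  have hca : 0 < c - a := by linarith
  rw [div_add_div _ _ (by positivity) (by positivity), div_le_div_iff₀ hb (by positivity)]
  nlinarith [mul_nonneg (mul_nonneg (sub_pos.2 hab).le (sub_pos.2 hbc).le) hca.le,
    mul_pos ha hc, mul_pos hb hc, mul_pos ha hb]

/-- lower sets in Fin p are initial segments -/
private lemma lower_initseg {p : ℕ} (s : Finset (Fin p))
    (hlow : ∀ ⦃i j : Fin p⦄, i ≤ j → j ∈ s → i ∈ s) (i : Fin p) :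
    i ∈ s ↔ i.val < s.card := by
  constructor
  · intro hi
    have hsub : Finset.Iic i ⊆ s := fun j hj => hlow (Finset.mem_Iic.1 hj) hi
    have := Finset.card_le_card hsub
    rw [Fin.card_Iic] at this
    omega
  · intro hi
    by_contra hns
    have hsub : s ⊆ Finset.Iio i := by
      intro j hj
      rw [Finset.mem_Iio]
      by_contra hij
      exact hns (hlow (le_of_not_gt hij) hj)
    have := Finset.card_le_card hsub
    rw [Fin.card_Iio] at this
    omega

/-- the core analytic inequality -/
private lemma core {P n k N E F v lam : ℝ}
    (hE : 0 ≤ E) (hF : 0 ≤ F) (hlam : 0 ≤ lam) (hv0 : 0 ≤ v) (hv1 : v ≤ 1)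
    (hn : 0 ≤ n) (hnk : n < k) (hkN : k < N) (hNP : N ≤ P)
    (hF0 : n = 0 → F = 0) (hE0 : N = P → E = 0) :
    min (((P-n)*(1-v) - E)/(P-n) + lam*((n*v - F)/n))
      (((P-N)*(1-v) - E)/(P-N) + lam*((N*v - F)/N))
    ≤ ((P-k)*(1-v) - E)/(P-k) + lam*((k*v - F)/k) := by
  have hk : 0 < k := lt_of_le_of_lt hn hnk
  have hN : 0 < N := hk.trans hkN
  have hPk : 0 < P - k := by linarith
  have hPn : 0 < P - n := by linarith
  set C : ℝ := (1-v) + lam*v with hC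
  set G : ℝ → ℝ := fun s => E/(P-s) + lam*(F/s) with hG
  -- value at k
  have hLk : ((P-k)*(1-v) - E)/(P-k) + lam*((k*v - F)/k) = C - G k := by
    simp only [hG, hC]
    field_simp
    ring
  -- value at n is ≤ C - G n
  have hLn : ((P-n)*(1-v) - E)/(P-n) + lam*((n*v - F)/n) ≤ C - G n := by
    rcases eq_or_lt_of_le hn with h0 | h0
    · have hFz : F = 0 := hF0 h0.symm
      have hP : 0 < P := by linarith
      simp only [hG, hC, ← h0, hFz, zero_mul, zero_sub, neg_zero, zero_div, mul_zero,
        div_zero, sub_zero]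
      have he : (P * (1 - v) - E) / P = (1 - v) - E/P := by field_simp
      rw [he]
      nlinarith [mul_nonneg hlam hv0]
    · apply le_of_eq
      simp only [hG, hC]
      field_simp
      ring
  -- value at N is ≤ C - G N
  have hLN : ((P-N)*(1-v) - E)/(P-N) + lam*((N*v - F)/N) ≤ C - G N := by
    rcases eq_or_lt_of_le hNP with h0 | h0
    · have hEz : E = 0 := hE0 h0
      have hP : 0 < P := by linarith
      simp only [hG, hC, h0, hEz, sub_self, zero_div, zero_sub, zero_mul, zero_add, div_zero]
      have he : (P * v - F) / P = v - F/P := by field_simp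
      rw [he, mul_sub]
      nlinarith
    · apply le_of_eq
      simp only [hG, hC]
      have hPN : 0 < P - N := by linarith
      field_simp
      ring
  -- convexity: G k ≤ max (G n) (G N)
  have hGk : G k ≤ max (G n) (G N) := by
    set θ : ℝ := (N - k)/(N - n) with hθ
    have hNn : 0 < N - n := by linarith
    have hθ0 : 0 ≤ θ := div_nonneg (by linarith) (by linarith)
    have hθ1 : θ ≤ 1 := by rw [hθ, div_le_one hNn]; linarith
    have hmix : G k ≤ θ * G n + (1 - θ) * G N := by
      have h1θ : 1 - θ = (k - n)/(N - n) := by rw [hθ]; field_simp; ring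
      -- F part
      have hFpart : F/k ≤ θ * (F/n) + (1-θ) * (F/N) := by
        rcases eq_or_lt_of_le hn with h0 | h0
        · have hFz : F = 0 := hF0 h0.symm
          simp [hFz]
        · have := inv_convex h0 hnk hkN
          have h2 := mul_le_mul_of_nonneg_left this hF
          calc F/k = F * (1/k) := by ring
            _ ≤ F * ((N-k)/((N-n)*n) + (k-n)/((N-n)*N)) := h2
            _ = θ * (F/n) + (1-θ) * (F/N) := by
                rw [hθ, h1θ]; field_simp
      -- E part
      have hEpart : E/(P-k) ≤ θ * (E/(P-n)) + (1-θ) * (E/(P-N)) := by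
        rcases eq_or_lt_of_le hNP with h0 | h0
        · have hEz : E = 0 := hE0 h0
          simp [hEz]
        · have hPN : 0 < P - N := by linarith
          have hba : P - N < P - k := by linarith
          have hcb : P - k < P - n := by linarith
          have := inv_convex hPN hba hcb
          have h2 := mul_le_mul_of_nonneg_left this hE
          calc E/(P-k) = E * (1/(P-k)) := by ring
            _ ≤ E * (((P-n)-(P-k))/(((P-n)-(P-N))*(P-N)) + ((P-k)-(P-N))/(((P-n)-(P-N))*(P-n))) := h2
            _ = θ * (E/(P-n)) + (1-θ) * (E/(P-N)) := by
                rw [hθ, h1θ]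
                have e1 : P - n - (P - k) = k - n := by ring
                have e2 : P - n - (P - N) = N - n := by ring
                have e3 : P - k - (P - N) = N - k := by ring
                rw [e1, e2, e3]
                field_simp
                ring
      calc G k = E/(P-k) + lam*(F/k) := rfl
        _ ≤ (θ * (E/(P-n)) + (1-θ) * (E/(P-N))) + lam * (θ * (F/n) + (1-θ) * (F/N)) := by
            refine add_le_add hEpart (mul_le_mul_of_nonneg_left hFpart hlam)
        _ = θ * G n + (1 - θ) * G N := by simp only [hG]; ring
    have hmax : θ * G n + (1 - θ) * G N ≤ max (G n) (G N) := by
      calc θ * G n + (1 - θ) * G N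
          ≤ θ * max (G n) (G N) + (1 - θ) * max (G n) (G N) := by
            refine add_le_add (mul_le_mul_of_nonneg_left (le_max_left _ _) hθ0)
              (mul_le_mul_of_nonneg_left (le_max_right _ _) (by linarith))
        _ = max (G n) (G N) := by ring
    exact hmix.trans hmax
  rw [hLk]
  rcases le_max_iff.1 hGk with h | h
  · exact min_le_of_left_le (hLn.trans (by linarith))
  · exact min_le_of_right_le (hLN.trans (by linarith))

private lemma lower_initseg' {p : ℕ} (s : Finset (Fin p))
    (hlow : ∀ ⦃i j : Fin p⦄, i ≤ j → j ∈ s → i ∈ s) (i : Fin p) :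
    i ∈ s ↔ i.val < s.card := by
  constructor
  · intro hi
    have hsub : Finset.Iic i ⊆ s := fun j hj => hlow (Finset.mem_Iic.1 hj) hi
    have := Finset.card_le_card hsub
    rw [Fin.card_Iic] at this
    omega
  · intro hi
    by_contra hns
    have hsub : s ⊆ Finset.Iio i := by
      intro j hj
      rw [Finset.mem_Iio]
      by_contra hij
      exact hns (hlow (le_of_not_gt hij) hj)
    have := Finset.card_le_card hsub
    rw [Fin.card_Iio] at this
    omega

private lemma card_filter_val_lt {p s : ℕ} (hs : s ≤ p) :
    (univ.filter (fun i : Fin p => i.val < s)).card = s := by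
  set t := univ.filter (fun i : Fin p => i.val < s) with ht
  have hlow : ∀ ⦃i j : Fin p⦄, i ≤ j → j ∈ t → i ∈ t := by
    intro i j hij hj
    have hj2 : j.val < s := (mem_filter.1 hj).2
    exact mem_filter.2 ⟨mem_univ _, lt_of_le_of_lt (Fin.le_def.1 hij) hj2⟩
  have hmem := lower_initseg' t hlow
  have hcardp : t.card ≤ p := by
    have := card_le_card (subset_univ t)
    simpa using this
  rcases Nat.lt_trichotomy t.card s with h | h | h
  · exfalso
    have hi : (⟨t.card, lt_of_lt_of_le h hs⟩ : Fin p) ∈ t :=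
      mem_filter.2 ⟨mem_univ _, h⟩
    exact lt_irrefl _ ((hmem _).1 hi)
  · exact h
  · exfalso
    have hi : (⟨s, lt_of_lt_of_le h hcardp⟩ : Fin p) ∈ t := (hmem _).2 h
    exact lt_irrefl _ (mem_filter.1 hi).2

private lemma card_filter_val_not_lt {p s : ℕ} (hs : s ≤ p) :
    (univ.filter (fun i : Fin p => ¬ i.val < s)).card = p - s := by
  have h1 := Finset.card_filter_add_card_filter_not
    (s := (univ : Finset (Fin p))) (p := fun i : Fin p => i.val < s)
  rw [card_filter_val_lt hs] at h1
  have h2 : (univ : Finset (Fin p)).card = p := by simp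
  omega

private def vecf (p s : ℕ) : Fin p → ℝ := fun i => if i.val < s then 1 else 0

theorem stmt2 (p : ℕ) (hp : 0 < p) (d : Fin p → ℝ) (hmono : Monotone d)
    (hbd : ∀ i, d i ∈ Set.Icc (0 : ℝ) 1) (lam : ℝ) (hlam : 0 < lam)
    (L : (Fin p → ℝ) → ℝ)
    (hL : ∀ a, L a = (∑ i, (1 - a i) * (1 - d i)) / ((p : ℝ) - ∑ j, a j)
        + lam * ((∑ i, a i * d i) / (∑ j, a j)))
    (a : Fin p → ℝ) (ha : ∀ i, a i = 0 ∨ a i = 1) :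
    L (fun _ => 0) ≤ L a ∨
      ∃ j : Fin p, L (fun i => if d i ≤ d j then 1 else 0) ≤ L a := by
  classical
  -- L of a vecf
  have L_vecf : ∀ s : ℕ, s ≤ p → L (vecf p s)
      = (∑ i ∈ univ.filter (fun i : Fin p => ¬ i.val < s), (1 - d i)) / ((p:ℝ) - s)
      + lam * ((∑ i ∈ univ.filter (fun i : Fin p => i.val < s), d i) / (s : ℝ)) := by
    intro s hs
    rw [hL]
    have h1 : ∑ j, vecf p s j = (s : ℝ) := by
      unfold vecf
      rw [Finset.sum_boole, card_filter_val_lt hs]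
    have h2 : ∑ i, vecf p s i * d i = ∑ i ∈ univ.filter (fun i : Fin p => i.val < s), d i := by
      rw [Finset.sum_filter]
      refine Finset.sum_congr rfl fun i _ => ?_
      unfold vecf
      by_cases h : i.val < s <;> simp [h]
    have h3 : ∑ i, (1 - vecf p s i) * (1 - d i)
        = ∑ i ∈ univ.filter (fun i : Fin p => ¬ i.val < s), (1 - d i) := by
      rw [Finset.sum_filter]
      refine Finset.sum_congr rfl fun i _ => ?_
      unfold vecf
      by_cases h : i.val < s <;> simp [h]
    rw [h1, h2, h3]
  -- setup
  set A : Finset (Fin p) := univ.filter (fun i => a i = 1) with hA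
  set k : ℕ := A.card with hkdef
  have hkp : k ≤ p := by
    have := card_le_card (subset_univ A)
    simpa [hkdef] using this
  have hsum_a : ∑ j, a j = (k : ℝ) := by
    have hpt : ∀ j, a j = if a j = 1 then (1:ℝ) else 0 := by
      intro j; rcases ha j with h | h <;> simp [h]
    rw [Finset.sum_congr rfl fun j _ => hpt j, Finset.sum_boole]
  by_cases hk0 : k = 0
  · left
    have hAe : A = ∅ := Finset.card_eq_zero.1 (hkdef ▸ hk0)
    have haz : a = fun _ => (0:ℝ) := by
      funext i
      rcases ha i with h | h
      · exact h
      · exact absurd (hAe ▸ mem_filter.2 ⟨mem_univ i, h⟩) (Finset.notMem_empty i)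
    rw [haz]
  have hk1 : 1 ≤ k := Nat.one_le_iff_ne_zero.2 hk0
  set j₀ : Fin p := ⟨k-1, by omega⟩ with hj₀
  have hj₀v : j₀.val = k - 1 := by rw [hj₀]
  set v : ℝ := d j₀ with hv
  have hv0 : 0 ≤ v := (hbd j₀).1
  have hv1 : v ≤ 1 := (hbd j₀).2
  have hdB : ∀ x : Fin p, x.val < k → d x ≤ v := by
    intro x hx
    rw [hv]
    exact hmono (by rw [Fin.le_def, hj₀v]; omega)
  have hdnB : ∀ x : Fin p, ¬ x.val < k → v ≤ d x := by
    intro x hx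
    rw [hv]
    exact hmono (by rw [Fin.le_def, hj₀v]; omega)
  -- step 1: L (vecf p k) ≤ L a
  have hSa : ∑ i, a i * d i = ∑ i ∈ A, d i := by
    rw [hA, Finset.sum_filter]
    refine Finset.sum_congr rfl fun i _ => ?_
    rcases ha i with h | h <;> simp [h]
  have hTa : ∑ i, (1 - a i) * (1 - d i)
      = ∑ i ∈ univ.filter (fun i => ¬ a i = 1), (1 - d i) := by
    rw [Finset.sum_filter]
    refine Finset.sum_congr rfl fun i _ => ?_
    rcases ha i with h | h <;> simp [h]
  set B : Finset (Fin p) := univ.filter (fun i : Fin p => i.val < k) with hB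
  have hcardB : B.card = k := card_filter_val_lt hkp
  have hcard_eq : (B \ A).card = (A \ B).card := by
    have h1 := Finset.card_inter_add_card_sdiff B A
    have h2 := Finset.card_inter_add_card_sdiff A B
    rw [Finset.inter_comm] at h2
    omega
  have hSle : ∑ i ∈ B, d i ≤ ∑ i ∈ A, d i := by
    have e1 := Finset.sum_sdiff (f := d) (Finset.inter_subset_left (s₁ := B) (s₂ := A))
    have e2 := Finset.sum_sdiff (f := d) (Finset.inter_subset_left (s₁ := A) (s₂ := B))
    rw [Finset.sdiff_inter_self_left] at e1 e2
    have h2 : ∑ i ∈ B \ A, d i ≤ (B \ A).card • v :=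
      Finset.sum_le_card_nsmul _ _ _ (fun x hx =>
        hdB x (mem_filter.1 (mem_sdiff.1 hx).1).2)
    have h3 : (A \ B).card • v ≤ ∑ i ∈ A \ B, d i :=
      Finset.card_nsmul_le_sum _ _ _ (fun x hx =>
        hdnB x (fun hlt => (mem_sdiff.1 hx).2 (mem_filter.2 ⟨mem_univ _, hlt⟩)))
    rw [hcard_eq, nsmul_eq_mul] at h2
    rw [nsmul_eq_mul] at h3
    have e3 : ∑ i ∈ B ∩ A, d i = ∑ i ∈ A ∩ B, d i := by rw [Finset.inter_comm]
    linarith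
  set Ac : Finset (Fin p) := univ.filter (fun i => ¬ a i = 1) with hAc
  set Bc : Finset (Fin p) := univ.filter (fun i : Fin p => ¬ i.val < k) with hBc
  have hBcAc : Bc \ Ac = A \ B := by
    ext x
    simp only [hBc, hAc, hA, hB, mem_sdiff, mem_filter, mem_univ, true_and]
    tauto
  have hAcBc : Ac \ Bc = B \ A := by
    ext x
    simp only [hBc, hAc, hA, hB, mem_sdiff, mem_filter, mem_univ, true_and]
    rcases ha x with h | h <;> simp [h]
  have hTle : ∑ i ∈ Bc, (1 - d i) ≤ ∑ i ∈ Ac, (1 - d i) := by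
    have e1 := Finset.sum_sdiff (f := fun i => 1 - d i) (Finset.inter_subset_left (s₁ := Bc) (s₂ := Ac))
    have e2 := Finset.sum_sdiff (f := fun i => 1 - d i) (Finset.inter_subset_left (s₁ := Ac) (s₂ := Bc))
    rw [Finset.sdiff_inter_self_left, hBcAc] at e1
    rw [Finset.sdiff_inter_self_left, hAcBc] at e2
    have h2 : ∑ i ∈ A \ B, (1 - d i) ≤ (A \ B).card • (1 - v) :=
      Finset.sum_le_card_nsmul _ _ _ (fun x hx => by
        have := hdnB x (fun hlt => (mem_sdiff.1 hx).2 (mem_filter.2 ⟨mem_univ _, hlt⟩))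
        linarith)
    have h3 : (B \ A).card • (1 - v) ≤ ∑ i ∈ B \ A, (1 - d i) :=
      Finset.card_nsmul_le_sum _ _ _ (fun x hx => by
        have := hdB x (mem_filter.1 (mem_sdiff.1 hx).1).2
        linarith)
    rw [← hcard_eq, nsmul_eq_mul] at h2
    rw [nsmul_eq_mul] at h3
    have e3 : ∑ i ∈ Bc ∩ Ac, (1 - d i) = ∑ i ∈ Ac ∩ Bc, (1 - d i) := by
      rw [Finset.inter_comm]
    linarith
  have step1 : L (vecf p k) ≤ L a := by
    rcases Nat.lt_or_ge k p with hklt | hge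
    · rw [hL a, L_vecf k hkp, hsum_a, hSa, hTa]
      have hpk : (0:ℝ) < (p:ℝ) - k := by
        have : (k:ℝ) < p := by exact_mod_cast hklt
        linarith
      have hkpos : (0:ℝ) < (k:ℝ) := by exact_mod_cast hk1
      refine add_le_add ((div_le_div_iff_of_pos_right hpk).2 hTle)
        (mul_le_mul_of_nonneg_left ((div_le_div_iff_of_pos_right hkpos).2 hSle) hlam.le)
    · have hkp' : k = p := le_antisymm hkp hge
      have haeq : a = vecf p k := by
        funext i
        have hAu : A = univ := Finset.eq_univ_of_card A (by simp [← hkdef, hkp'])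
        have hiA : i ∈ A := by rw [hAu]; exact mem_univ i
        have h1 : a i = 1 := (mem_filter.1 hiA).2
        have h2 : i.val < k := by rw [hkp']; exact i.isLt
        simp [vecf, h1, h2]
      rw [haeq]
  -- step 2: thresholds
  have hlowN : ∀ ⦃i j : Fin p⦄, i ≤ j → j ∈ univ.filter (fun i : Fin p => d i ≤ v) →
      i ∈ univ.filter (fun i : Fin p => d i ≤ v) := by
    intro i j hij hj
    exact mem_filter.2 ⟨mem_univ _, le_trans (hmono hij) (mem_filter.1 hj).2⟩
  have hlown : ∀ ⦃i j : Fin p⦄, i ≤ j → j ∈ univ.filter (fun i : Fin p => d i < v) →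
      i ∈ univ.filter (fun i : Fin p => d i < v) := by
    intro i j hij hj
    exact mem_filter.2 ⟨mem_univ _, lt_of_le_of_lt (hmono hij) (mem_filter.1 hj).2⟩
  set Nn : ℕ := (univ.filter (fun i : Fin p => d i ≤ v)).card with hNdef
  set nn : ℕ := (univ.filter (fun i : Fin p => d i < v)).card with hndef
  have hmemN : ∀ i : Fin p, d i ≤ v ↔ i.val < Nn := by
    intro i
    have := lower_initseg' _ hlowN i
    simpa using this
  have hmemn : ∀ i : Fin p, d i < v ↔ i.val < nn := by
    intro i
    have := lower_initseg' _ hlown i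
    simpa using this
  have hNp : Nn ≤ p := by
    have := card_le_card (subset_univ (univ.filter (fun i : Fin p => d i ≤ v)))
    simpa [hNdef] using this
  have hnk : nn < k := by
    have h2 : ¬ (j₀.val < nn) := fun h => absurd ((hmemn j₀).2 h) (by rw [hv]; exact lt_irrefl _)
    omega
  have hkN : k ≤ Nn := by
    have h2 : j₀.val < Nn := (hmemN j₀).1 (le_of_eq hv.symm)
    omega
  set Fv : ℝ := ∑ i ∈ univ.filter (fun i : Fin p => i.val < nn), (v - d i) with hFdef
  set Ev : ℝ := ∑ i ∈ univ.filter (fun i : Fin p => ¬ i.val < Nn), (d i - v) with hEdef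
  have hF : 0 ≤ Fv := Finset.sum_nonneg fun i hi => by
    have h1 : d i < v := (hmemn i).2 (mem_filter.1 hi).2
    linarith
  have hE : 0 ≤ Ev := Finset.sum_nonneg fun i hi => by
    have h1 : ¬ d i ≤ v := fun h => (mem_filter.1 hi).2 ((hmemN i).1 h)
    linarith
  have hF0 : nn = 0 → Fv = 0 := by
    intro h
    rw [hFdef]
    have he : univ.filter (fun i : Fin p => i.val < nn) = ∅ := by
      rw [h]; simp
    rw [he, Finset.sum_empty]
  have hE0 : Nn = p → Ev = 0 := by
    intro h
    rw [hEdef]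
    have he : univ.filter (fun i : Fin p => ¬ i.val < Nn) = ∅ := by
      rw [h]
      refine Finset.filter_false_of_mem fun i _ => ?_
      simp [i.isLt]
    rw [he, Finset.sum_empty]
  have hSsum : ∀ s : ℕ, nn ≤ s → s ≤ Nn →
      ∑ i ∈ univ.filter (fun i : Fin p => i.val < s), d i = (s:ℝ)*v - Fv := by
    intro s hns hsN
    have hsp : s ≤ p := le_trans hsN hNp
    have hsub : univ.filter (fun i : Fin p => i.val < nn)
        ⊆ univ.filter (fun i : Fin p => i.val < s) := by
      intro x hx
      exact mem_filter.2 ⟨mem_univ _, lt_of_lt_of_le (mem_filter.1 hx).2 hns⟩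
    have e1 := Finset.sum_sdiff (f := d) hsub
    have e2 : ∑ x ∈ (univ.filter (fun i : Fin p => i.val < s))
        \ (univ.filter (fun i : Fin p => i.val < nn)), d x = ((s - nn : ℕ):ℝ) * v := by
      have hband : ∀ x ∈ (univ.filter (fun i : Fin p => i.val < s))
          \ (univ.filter (fun i : Fin p => i.val < nn)), d x = v := by
        intro x hx
        rcases mem_sdiff.1 hx with ⟨h1, h2⟩
        have hx1 : x.val < s := (mem_filter.1 h1).2
        have hx2 : ¬ x.val < nn := fun h => h2 (mem_filter.2 ⟨mem_univ _, h⟩)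
        have hle : d x ≤ v := (hmemN x).2 (lt_of_lt_of_le hx1 hsN)
        have hge : ¬ d x < v := fun h => hx2 ((hmemn x).1 h)
        linarith
      rw [Finset.sum_congr rfl hband, Finset.sum_const, Finset.card_sdiff_of_subset hsub,
        card_filter_val_lt hsp, card_filter_val_lt (by omega : nn ≤ p), nsmul_eq_mul]
    have e3 : ∑ i ∈ univ.filter (fun i : Fin p => i.val < nn), d i = (nn:ℝ)*v - Fv := by
      have hpt : ∀ i ∈ univ.filter (fun i : Fin p => i.val < nn), d i = v - (v - d i) := by
        intro i _; ring
      rw [Finset.sum_congr rfl hpt, Finset.sum_sub_distrib, Finset.sum_const,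
        card_filter_val_lt (by omega : nn ≤ p), nsmul_eq_mul, ← hFdef]
    have hcast : ((s - nn : ℕ):ℝ) = (s:ℝ) - nn := by
      rw [Nat.cast_sub hns]
    rw [← e1, e2, e3, hcast]
    ring
  have hTsum : ∀ s : ℕ, nn ≤ s → s ≤ Nn →
      ∑ i ∈ univ.filter (fun i : Fin p => ¬ i.val < s), (1 - d i)
        = ((p:ℝ) - s)*(1-v) - Ev := by
    intro s hns hsN
    have hsp : s ≤ p := le_trans hsN hNp
    have hsub : univ.filter (fun i : Fin p => ¬ i.val < Nn)
        ⊆ univ.filter (fun i : Fin p => ¬ i.val < s) := by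
      intro x hx
      exact mem_filter.2 ⟨mem_univ _, fun h => (mem_filter.1 hx).2 (lt_of_lt_of_le h hsN)⟩
    have e1 := Finset.sum_sdiff (f := fun i => 1 - d i) hsub
    have e2 : ∑ x ∈ (univ.filter (fun i : Fin p => ¬ i.val < s))
        \ (univ.filter (fun i : Fin p => ¬ i.val < Nn)), (1 - d x)
        = ((Nn - s : ℕ):ℝ) * (1 - v) := by
      have hband : ∀ x ∈ (univ.filter (fun i : Fin p => ¬ i.val < s))
          \ (univ.filter (fun i : Fin p => ¬ i.val < Nn)), (1 - d x) = 1 - v := by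
        intro x hx
        rcases mem_sdiff.1 hx with ⟨h1, h2⟩
        have hx1 : ¬ x.val < s := (mem_filter.1 h1).2
        have hx2 : x.val < Nn := by
          by_contra hc
          exact h2 (mem_filter.2 ⟨mem_univ _, hc⟩)
        have hle : d x ≤ v := (hmemN x).2 hx2
        have hge : ¬ d x < v := fun h => hx1 (lt_of_lt_of_le ((hmemn x).1 h) hns)
        have : d x = v := le_antisymm hle (not_lt.1 hge)
        rw [this]
      rw [Finset.sum_congr rfl hband, Finset.sum_const, Finset.card_sdiff_of_subset hsub,
        card_filter_val_not_lt hsp, card_filter_val_not_lt hNp, nsmul_eq_mul]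
      congr 1
      have hnat : p - s - (p - Nn) = Nn - s := by omega
      rw [hnat]
    have e3 : ∑ i ∈ univ.filter (fun i : Fin p => ¬ i.val < Nn), (1 - d i)
        = ((p:ℝ) - Nn)*(1-v) - Ev := by
      have hpt : ∀ i ∈ univ.filter (fun i : Fin p => ¬ i.val < Nn),
          (1 - d i) = (1 - v) - (d i - v) := by
        intro i _; ring
      rw [Finset.sum_congr rfl hpt, Finset.sum_sub_distrib, Finset.sum_const,
        card_filter_val_not_lt hNp, nsmul_eq_mul, ← hEdef]
      congr 2
      rw [Nat.cast_sub hNp]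
    have hcast : ((Nn - s : ℕ):ℝ) = (Nn:ℝ) - s := by
      rw [Nat.cast_sub hsN]
    rw [← e1, e2, e3, hcast]
    ring
  -- L values
  have hnN : nn ≤ Nn := by omega
  have hLn' : L (vecf p nn) = (((p:ℝ)-(nn:ℝ))*(1-v) - Ev)/((p:ℝ)-(nn:ℝ))
      + lam*(((nn:ℝ)*v - Fv)/(nn:ℝ)) := by
    rw [L_vecf nn (by omega), hSsum nn le_rfl hnN, hTsum nn le_rfl hnN]
  have hLk' : L (vecf p k) = (((p:ℝ)-(k:ℝ))*(1-v) - Ev)/((p:ℝ)-(k:ℝ))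
      + lam*(((k:ℝ)*v - Fv)/(k:ℝ)) := by
    rw [L_vecf k hkp, hSsum k (by omega) hkN, hTsum k (by omega) hkN]
  have hLN' : L (vecf p Nn) = (((p:ℝ)-(Nn:ℝ))*(1-v) - Ev)/((p:ℝ)-(Nn:ℝ))
      + lam*(((Nn:ℝ)*v - Fv)/(Nn:ℝ)) := by
    rw [L_vecf Nn hNp, hSsum Nn hnN le_rfl, hTsum Nn hnN le_rfl]
  -- threshold vector at j₀ is vecf p Nn
  have hvecN : (fun i => if d i ≤ d j₀ then (1:ℝ) else 0) = vecf p Nn := by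
    funext i
    by_cases h : d i ≤ d j₀
    · have h2 : i.val < Nn := (hmemN i).1 (hv ▸ h)
      simp [vecf, h, h2]
    · have h2 : ¬ i.val < Nn := fun hh => h (hv ▸ (hmemN i).2 hh)
      simp [vecf, h, h2]
  rcases eq_or_lt_of_le hkN with hkeq | hklt
  · right
    refine ⟨j₀, ?_⟩
    rw [hvecN, ← hkeq]
    exact step1
  · -- apply core inequality
    have hcast_nk : ((nn:ℝ)) < (k:ℝ) := by exact_mod_cast hnk
    have hcast_kN : ((k:ℝ)) < (Nn:ℝ) := by exact_mod_cast hklt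
    have hcast_Np : ((Nn:ℝ)) ≤ (p:ℝ) := by exact_mod_cast hNp
    have key := core (P := (p:ℝ)) (n := (nn:ℝ)) (k := (k:ℝ)) (N := (Nn:ℝ))
      (E := Ev) (F := Fv) (v := v) (lam := lam)
      hE hF hlam.le hv0 hv1 (Nat.cast_nonneg nn) hcast_nk hcast_kN hcast_Np
      (fun h => hF0 (by exact_mod_cast h)) (fun h => hE0 (by exact_mod_cast h))
    rw [← hLn', ← hLN', ← hLk'] at key
    rcases min_le_iff.1 (le_trans key step1) with hc | hc
    · by_cases hn0 : nn = 0
      · left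
        have hz : (fun _ : Fin p => (0:ℝ)) = vecf p nn := by
          funext i
          simp [vecf, hn0]
        rw [hz]
        exact hc
      · right
        refine ⟨⟨nn - 1, by omega⟩, ?_⟩
        have hj1 : d (⟨nn - 1, by omega⟩ : Fin p) < v := (hmemn _).2 (by simp; omega)
        have hvecn : (fun i => if d i ≤ d (⟨nn - 1, by omega⟩ : Fin p) then (1:ℝ) else 0)
            = vecf p nn := by
          funext i
          by_cases h : d i ≤ d (⟨nn - 1, by omega⟩ : Fin p)
          · have h2 : i.val < nn := (hmemn i).1 (lt_of_le_of_lt h hj1)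
            simp [vecf, h, h2]
          · have h2 : ¬ i.val < nn := by
              intro hh
              exact h (hmono (by rw [Fin.le_def]; simp; omega))
            simp [vecf, h, h2]
        rw [hvecn]
        exact hc
    · right
      refine ⟨j₀, ?_⟩
      rw [hvecN]
      exact hc
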